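/- Let X be a Banach space and A an m-dissipative relation on X. If u ∈ ker A with u ≠ 0, then there exists u' ∈ ker A' such that u'(u) ≠ 0. -/

import Mathlib

open Filter Topology

/-- A relation `A ⊆ X × X` is dissipative if `‖lx‖ ≤ ‖lx - y‖` for all `(x,y) ∈ A`
and all real `l > 0`. -/
def Dissipative {𝕜 X : Type*} [RCLike 𝕜] [NormedAddCommGroup X] [NormedSpace 𝕜 X]
    (A : Submodule 𝕜 (X × X)) : Prop :=
  ∀ p ∈ A, ∀ l : ℝ, 0 < l → ‖(l : 𝕜) • p.1‖ ≤ ‖(l : 𝕜) • p.1 - p.2‖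

/-- Membership in the adjoint relation `A' ⊆ X' × X'`:
`(y', x') ∈ A'` iff `x'(x) = y'(y)` for all `(x,y) ∈ A`. -/
def InAdjoint {𝕜 X : Type*} [RCLike 𝕜] [NormedAddCommGroup X] [NormedSpace 𝕜 X]
    (A : Submodule 𝕜 (X × X)) (y' : X →L[𝕜] 𝕜) (x' : X →L[𝕜] 𝕜) : Prop :=
  ∀ p ∈ A, x' p.1 = y' p.2

/-- If `A` is an m-dissipative relation on `X` and `0 ≠ u ∈ ker A`, then there exists
`u' ∈ ker A'` with `u'(u) ≠ 0`. -/
theorem stmt_12 {𝕜 X : Type*} [RCLike 𝕜] [NormedAddCommGroup X] [NormedSpace 𝕜 X]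
    [CompleteSpace X] (A : Submodule 𝕜 (X × X))
    (hdiss : Dissipative A)
    (hm : ∃ l : ℝ, 0 < l ∧ ∀ v : X, ∃ p ∈ A, v = (l : 𝕜) • p.1 - p.2)
    (u : X) (hu : (u, (0 : X)) ∈ A) (hu0 : u ≠ 0) :
    ∃ u' : X →L[𝕜] 𝕜, InAdjoint A u' (0 : X →L[𝕜] 𝕜) ∧ u' u ≠ 0 := by
  classical
  set R : Submodule 𝕜 X := A.map (LinearMap.snd 𝕜 X X) with hR
  set S : Submodule 𝕜 X := R.topologicalClosure with hSdef
  -- Key inequality: ‖u‖ ≤ ‖u - y‖ for y in the range of A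
  have hkey : ∀ y ∈ R, ‖u‖ ≤ ‖u - y‖ := by
    rintro y ⟨p, hp, rfl⟩
    have hle : ∀ n : ℕ, ‖u + ((((n : ℝ) + 1)⁻¹ : ℝ) : 𝕜) • p.1‖
        ≤ ‖(u + ((((n : ℝ) + 1)⁻¹ : ℝ) : 𝕜) • p.1) - p.2‖ := by
      intro n
      have hq : (p + ((((n : ℝ) + 1 : ℝ)) : 𝕜) • (u, (0 : X))) ∈ A :=
        A.add_mem hp (A.smul_mem _ hu)
      have h := hdiss _ hq (((n : ℝ) + 1)⁻¹) (by positivity)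
      have hcancel : ((((n : ℝ) + 1)⁻¹ : ℝ) : 𝕜) * (((n : ℝ) + 1 : ℝ) : 𝕜) = 1 := by
        rw [← RCLike.ofReal_mul, inv_mul_cancel₀ (by positivity), RCLike.ofReal_one]
      have h1 : ((((n : ℝ) + 1)⁻¹ : ℝ) : 𝕜) • (p + ((((n : ℝ) + 1 : ℝ)) : 𝕜) • (u, (0 : X))).1
          = u + ((((n : ℝ) + 1)⁻¹ : ℝ) : 𝕜) • p.1 := by
        have hne : ((n : 𝕜) + 1) ≠ 0 := Nat.cast_add_one_ne_zero n
        simp [smul_add, smul_smul, hcancel, add_comm, inv_mul_cancel₀ hne]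
      have h2 : (p + ((((n : ℝ) + 1 : ℝ)) : 𝕜) • (u, (0 : X))).2 = p.2 := by simp
      rw [h1, h2] at h
      exact h
    have hlim : Tendsto (fun n : ℕ => ((((n : ℝ) + 1)⁻¹ : ℝ) : 𝕜) • p.1) atTop (𝓝 0) := by
      apply squeeze_zero_norm (a := fun n : ℕ => ((n : ℝ) + 1)⁻¹ * ‖p.1‖)
      · intro n
        rw [norm_smul, RCLike.norm_ofReal, abs_of_pos (by positivity)]
      · have h0 : Tendsto (fun n : ℕ => ((n : ℝ) + 1)⁻¹) atTop (𝓝 0) :=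
          tendsto_one_div_add_atTop_nhds_zero_nat.congr (by intro n; rw [one_div])
        simpa using h0.mul_const ‖p.1‖
    have hL : Tendsto (fun n : ℕ => ‖u + ((((n : ℝ) + 1)⁻¹ : ℝ) : 𝕜) • p.1‖) atTop (𝓝 ‖u‖) := by
      have : Tendsto (fun n : ℕ => u + ((((n : ℝ) + 1)⁻¹ : ℝ) : 𝕜) • p.1) atTop (𝓝 u) := by
        simpa using (tendsto_const_nhds.add hlim)
      exact this.norm
    have hRt : Tendsto (fun n : ℕ => ‖(u + ((((n : ℝ) + 1)⁻¹ : ℝ) : 𝕜) • p.1) - p.2‖)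
        atTop (𝓝 ‖u - p.2‖) := by
      have : Tendsto (fun n : ℕ => (u + ((((n : ℝ) + 1)⁻¹ : ℝ) : 𝕜) • p.1) - p.2)
          atTop (𝓝 (u - p.2)) := by
        simpa using ((tendsto_const_nhds.add hlim).sub tendsto_const_nhds)
      exact this.norm
    exact le_of_tendsto_of_tendsto' hL hRt hle
  -- The inequality passes to the closure, so `u ∉ S`.
  have hkeyS : ∀ y ∈ S, ‖u‖ ≤ ‖u - y‖ := by
    intro y hy
    have hsub : (S : Set X) ⊆ {y : X | ‖u‖ ≤ ‖u - y‖} := by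
      rw [hSdef, Submodule.topologicalClosure_coe]
      exact closure_minimal hkey
        (isClosed_le continuous_const ((continuous_const.sub continuous_id).norm))
    exact hsub hy
  have hnot : u ∉ S := by
    intro hmem
    have := hkeyS u hmem
    simp only [sub_self, norm_zero] at this
    exact hu0 (norm_le_zero_iff.mp this)
  haveI hSc : IsClosed (S : Set X) := R.isClosed_topologicalClosure
  -- The continuous quotient map
  let π : X →L[𝕜] X ⧸ S :=
    S.mkQ.mkContinuous 1 (fun m => by simpa using Submodule.Quotient.norm_mk_le S m)
  have hπ : ∀ x : X, π x = Submodule.Quotient.mk x := fun x => rfl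
  have hπu : π u ≠ 0 := by
    rw [hπ, ne_eq, Submodule.Quotient.mk_eq_zero]
    exact hnot
  obtain ⟨g, -, hg⟩ := exists_dual_vector 𝕜 (π u) (norm_ne_zero_iff.mpr hπu)
  refine ⟨g.comp π, ?_, ?_⟩
  · intro p hp
    have hp2 : p.2 ∈ S := R.le_topologicalClosure ⟨p, hp, rfl⟩
    have : π p.2 = 0 := by rw [hπ, Submodule.Quotient.mk_eq_zero]; exact hp2
    simp [this]
  · simp only [ContinuousLinearMap.comp_apply, hg]
    simpa using (norm_ne_zero_iff.mpr hπu)
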